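/- arXiv:2502.05973 — 2 statements merged into one kernel-verified Lean document; each statement's English description precedes it below -/
import Mathlib

section
/- Let $Q \subset \mathbb{R}^{d}$ be a cube of side length $L$, and let $\mathbf{B}$ be a finite collection of pairwise disjoint axis-parallel cubes of side length $s \leq L$ contained in $Q$. Let $\mathcal{S}$ denote a fixed family of 'slabs' (arbitrary subsets of $Q$). Then there exists a dyadic number $\rho \geq 1$ and a subcollection $\mathbf{B}' \subseteq \mathbf{B}$ with $|\mathbf{B}'| \geq c (\log(2 + |\mathbf{B}|))^{-1} |\mathbf{B}|$ for an absolute constant $c > 0$, such that: (1) every slab $S \in \mathcal{S}$ intersects at most $2\rho$ cubes of $\mathbf{B}'$; and (2) there exist slabs $S_1, \dots, S_m \in \mathcal{S}$ with $m \leq C |\mathbf{B}'|/\rho$ such that every cube of $\mathbf{B}'$ intersects $S_1 \cup \dots \cup S_m$ — provided that every cube of $\mathbf{B}$ intersects at least one slab of $\mathcal{S}$ and $|\{B \in \mathbf{B} : B \cap S \neq \emptyset\}| \leq |\mathbf{B}|$ for all $S$. -/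
open Finset

section Abstract

variable {α β : Type*} [DecidableEq α] [DecidableEq β]
variable (S : Set β) (R : α → β → Prop) [∀ b T, Decidable (R b T)]

lemma crl_level_step (j : ℕ) (B : Finset α) :
    ∃ B₁ : Finset α, B₁ ⊆ B ∧ ∃ 𝒮 : Finset β, ↑𝒮 ⊆ S ∧
      2 ^ j * 𝒮.card ≤ B₁.card ∧
      (∀ b ∈ B₁, ∃ T ∈ 𝒮, R b T) ∧
      (∀ T ∈ S, ((B \ B₁).filter (fun b => R b T)).card < 2 ^ j) := by
  induction B using Finset.strongInduction with
  | _ B ih =>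
    by_cases h : ∃ T ∈ S, 2 ^ j ≤ (B.filter (fun b => R b T)).card
    · obtain ⟨T₀, hT₀S, hT₀⟩ := h
      set D := B.filter (fun b => R b T₀) with hDdef
      have hDB : D ⊆ B := filter_subset _ _
      have hDne : D.Nonempty := card_pos.mp (lt_of_lt_of_le (Nat.pow_pos two_pos) hT₀)
      have hss : B \ D ⊂ B := sdiff_ssubset hDB hDne
      obtain ⟨B₁, hB₁, 𝒮, h𝒮, hc, hcov, hrem⟩ := ih (B \ D) hss
      have hdisj : Disjoint D B₁ :=
        Finset.disjoint_left.mpr (fun a haD haB₁ => (mem_sdiff.mp (hB₁ haB₁)).2 haD)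
      refine ⟨D ∪ B₁, union_subset hDB (hB₁.trans (sdiff_subset)), insert T₀ 𝒮, ?_, ?_, ?_, ?_⟩
      · intro T hT
        rcases Finset.mem_insert.mp hT with h | h
        · exact h ▸ hT₀S
        · exact h𝒮 h
      · have hcardU : (D ∪ B₁).card = D.card + B₁.card := card_union_of_disjoint hdisj
        have : 2 ^ j * (insert T₀ 𝒮).card ≤ 2 ^ j * (𝒮.card + 1) := by
          exact Nat.mul_le_mul_left _ (card_insert_le _ _)
        calc 2 ^ j * (insert T₀ 𝒮).card ≤ 2 ^ j * (𝒮.card + 1) := this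
          _ = 2 ^ j * 𝒮.card + 2 ^ j := by ring
          _ ≤ B₁.card + D.card := Nat.add_le_add hc hT₀
          _ = (D ∪ B₁).card := by rw [hcardU]; ring
      · intro b hb
        rcases Finset.mem_union.mp hb with h | h
        · exact ⟨T₀, mem_insert_self _ _, (mem_filter.mp h).2⟩
        · obtain ⟨T, hT, hRT⟩ := hcov b h
          exact ⟨T, mem_insert_of_mem hT, hRT⟩
      · intro T hT
        have heq : B \ (D ∪ B₁) = (B \ D) \ B₁ := by
          ext x; simp only [mem_sdiff, mem_union]; tauto
        rw [heq]
        exact hrem T hT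
    · push_neg at h
      refine ⟨∅, empty_subset _, ∅, by simp, by simp, by simp, ?_⟩
      intro T hT
      simpa using h T hT

lemma crl_decomp : ∀ (j : ℕ) (B : Finset α),
    (∀ b ∈ B, ∃ T ∈ S, R b T) →
    (∀ T ∈ S, (B.filter (fun b => R b T)).card ≤ 2 ^ (j + 1)) →
    ∃ P : ℕ → Finset α,
      B.card ≤ ∑ k ∈ Finset.range (j + 1), (P k).card ∧
      ∀ k, k ≤ j →
        P k ⊆ B ∧
        (∀ T ∈ S, ((P k).filter (fun b => R b T)).card ≤ 2 ^ (k + 1)) ∧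
        ∃ 𝒮 : Finset β, ↑𝒮 ⊆ S ∧ 2 ^ k * 𝒮.card ≤ (P k).card ∧
          ∀ b ∈ P k, ∃ T ∈ 𝒮, R b T := by
  intro j
  induction j with
  | zero =>
    intro B hcov hcnt
    obtain ⟨B₁, hB₁, 𝒮, h𝒮, hc, hcv, hrem⟩ := crl_level_step S R 0 B
    have hempty : B \ B₁ = ∅ := by
      by_contra hne
      obtain ⟨b, hb⟩ := Finset.nonempty_iff_ne_empty.mpr hne
      obtain ⟨T, hT, hRT⟩ := hcov b (mem_sdiff.mp hb).1
      have : 1 ≤ ((B \ B₁).filter (fun b => R b T)).card :=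
        card_pos.mpr ⟨b, mem_filter.mpr ⟨hb, hRT⟩⟩
      have := hrem T hT
      omega
    have hBeq : B₁ = B := by
      apply Finset.Subset.antisymm hB₁
      intro b hb
      by_contra hbn
      have : b ∈ B \ B₁ := mem_sdiff.mpr ⟨hb, hbn⟩
      rw [hempty] at this
      exact notMem_empty b this
    refine ⟨fun _ => B₁, ?_, ?_⟩
    · simp [hBeq]
    · intro k hk
      refine ⟨hB₁, ?_, 𝒮, h𝒮, ?_, hcv⟩
      · intro T hT
        calc ((B₁).filter (fun b => R b T)).card ≤ (B.filter (fun b => R b T)).card :=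
              card_le_card (filter_subset_filter _ hB₁)
          _ ≤ 2 ^ (0 + 1) := hcnt T hT
          _ ≤ 2 ^ (k + 1) := Nat.pow_le_pow_right (by norm_num) (by omega)
      · calc 2 ^ k * 𝒮.card = 2 ^ k * 𝒮.card := rfl
          _ ≤ B₁.card := by
              interval_cases k
              simpa using hc
  | succ j IH =>
    intro B hcov hcnt
    obtain ⟨B₁, hB₁, 𝒮, h𝒮, hc, hcv, hrem⟩ := crl_level_step S R (j + 1) B
    have hcov' : ∀ b ∈ B \ B₁, ∃ T ∈ S, R b T := fun b hb => hcov b (mem_sdiff.mp hb).1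
    have hcnt' : ∀ T ∈ S, ((B \ B₁).filter (fun b => R b T)).card ≤ 2 ^ (j + 1) :=
      fun T hT => Nat.le_of_lt (hrem T hT)
    obtain ⟨P, hPsum, hPk⟩ := IH (B \ B₁) hcov' hcnt'
    refine ⟨fun k => if k = j + 1 then B₁ else P k, ?_, ?_⟩
    · rw [Finset.sum_range_succ]
      have h1 : ∑ k ∈ Finset.range (j + 1), (if k = j + 1 then B₁ else P k).card
          = ∑ k ∈ Finset.range (j + 1), (P k).card := by
        apply Finset.sum_congr rfl
        intro k hk
        rw [if_neg (Nat.ne_of_lt (mem_range.mp hk))]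
      rw [h1]
      beta_reduce
      rw [if_pos rfl]
      have h2 : (B \ B₁).card + B₁.card = B.card := Finset.card_sdiff_add_card_eq_card hB₁
      omega
    · intro k hk
      beta_reduce
      rcases Nat.lt_or_ge k (j + 1) with hlt | hge
      · rw [if_neg (Nat.ne_of_lt hlt)]
        obtain ⟨hsub, hreg, hcover⟩ := hPk k (Nat.lt_succ_iff.mp hlt)
        exact ⟨hsub.trans (sdiff_subset), hreg, hcover⟩
      · have hkeq : k = j + 1 := le_antisymm hk hge
        subst hkeq
        rw [if_pos rfl]
        refine ⟨hB₁, ?_, 𝒮, h𝒮, hc, hcv⟩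
        intro T hT
        calc ((B₁).filter (fun b => R b T)).card ≤ (B.filter (fun b => R b T)).card :=
              card_le_card (filter_subset_filter _ hB₁)
          _ ≤ 2 ^ (j + 1 + 1) := hcnt T hT

end Abstract

/-- Covering/regularity lemma: given pairwise disjoint axis-parallel subcubes of
side `s` of a cube `Q` of side `L`, and a family `S` of slabs in `Q` such that
every cube meets some slab, there is a dyadic `ρ = 2^j ≥ 1` and a
`(log)⁻¹`-fraction subfamily `B'` that is `ρ`-regular for `S`: every slab meets
at most `2ρ` cubes of `B'`, and `B'` is covered by at most `C|B'|/ρ` slabs. -/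
theorem covering_regularity_lemma :
    ∃ c : ℝ, 0 < c ∧ ∃ C : ℝ, 0 < C ∧
    ∀ (d : ℕ) (L s : ℝ) (q : Fin d → ℝ), 0 < s → s ≤ L →
    ∀ B : Finset (Fin d → ℝ),
      (∀ b ∈ B, Set.Icc b (fun i => b i + s) ⊆ Set.Icc q (fun i => q i + L)) →
      ((B : Set (Fin d → ℝ)).Pairwise fun b b' =>
        Disjoint (Set.Icc b (fun i => b i + s)) (Set.Icc b' (fun i => b' i + s))) →
    ∀ S : Set (Set (Fin d → ℝ)),
      (∀ T ∈ S, T ⊆ Set.Icc q (fun i => q i + L)) →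
      (∀ b ∈ B, ∃ T ∈ S, (Set.Icc b (fun i => b i + s) ∩ T).Nonempty) →
      (∀ T ∈ S,
        {b ∈ (B : Set (Fin d → ℝ)) |
          (Set.Icc b (fun i => b i + s) ∩ T).Nonempty}.ncard ≤ B.card) →
      ∃ (j : ℕ) (B' : Finset (Fin d → ℝ)), B' ⊆ B ∧
        c * (Real.log (2 + (B.card : ℝ)))⁻¹ * (B.card : ℝ) ≤ (B'.card : ℝ) ∧
        (∀ T ∈ S,
          ({b ∈ (B' : Set (Fin d → ℝ)) |
            (Set.Icc b (fun i => b i + s) ∩ T).Nonempty}.ncard : ℝ) ≤ 2 * 2 ^ j) ∧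
        ∃ 𝒮 : Finset (Set (Fin d → ℝ)), (𝒮 : Set (Set (Fin d → ℝ))) ⊆ S ∧
          (𝒮.card : ℝ) ≤ C * (B'.card : ℝ) / 2 ^ j ∧
          ∀ b ∈ B', ∃ T ∈ 𝒮, (Set.Icc b (fun i => b i + s) ∩ T).Nonempty := by
  classical
  refine ⟨1/4, by norm_num, 1, by norm_num, ?_⟩
  intro d L s q hs hsL B hBQ hBdisj S hSQ hcov hcnt
  set R : (Fin d → ℝ) → Set (Fin d → ℝ) → Prop :=
    fun b T => (Set.Icc b (fun i => b i + s) ∩ T).Nonempty with hR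
  -- convert ncard hypothesis into filter-card form
  have hset : ∀ (B'' : Finset (Fin d → ℝ)) (T : Set (Fin d → ℝ)),
      {b ∈ (B'' : Set (Fin d → ℝ)) | R b T}.ncard = (B''.filter (fun b => R b T)).card := by
    intro B'' T
    rw [show {b ∈ (B'' : Set (Fin d → ℝ)) | R b T} = ↑(B''.filter (fun b => R b T)) by
      ext x; simp [Set.mem_setOf_eq]]
    exact Set.ncard_coe_finset _
  rcases Nat.eq_zero_or_pos B.card with hn0 | hn1
  · -- B is empty
    refine ⟨0, ∅, Finset.empty_subset _, by simp [hn0], ?_, ∅, by simp, by simp, by simp⟩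
    intro T hT
    have : {b ∈ ((∅ : Finset (Fin d → ℝ)) : Set (Fin d → ℝ)) | R b T}.ncard = 0 := by
      rw [hset]; simp
    rw [this]
    norm_num
  · set n := B.card with hn
    set J := Nat.log 2 n with hJ
    have hcnt' : ∀ T ∈ S, (B.filter (fun b => R b T)).card ≤ 2 ^ (J + 1) := by
      intro T hT
      have h1 := hcnt T hT
      rw [hset B T] at h1
      calc (B.filter (fun b => R b T)).card ≤ n := h1
        _ ≤ 2 ^ (J + 1) := Nat.le_of_lt (Nat.lt_pow_succ_log_self (by norm_num) n)
    obtain ⟨P, hPsum, hPk⟩ := crl_decomp S R J B hcov hcnt'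
    -- pick the largest piece
    obtain ⟨k, hkmem, hkmax⟩ := Finset.exists_max_image (Finset.range (J + 1))
      (fun k => (P k).card) ⟨0, Finset.mem_range.mpr (Nat.succ_pos J)⟩
    have hksum : n ≤ (J + 1) * (P k).card := by
      calc n ≤ ∑ i ∈ Finset.range (J + 1), (P i).card := hPsum
        _ ≤ (Finset.range (J + 1)).card * (P k).card :=
            Finset.sum_le_card_nsmul _ _ _ (fun i hi => hkmax i hi)
        _ = (J + 1) * (P k).card := by rw [Finset.card_range]
    obtain ⟨hsub, hreg, 𝒮, h𝒮S, h𝒮c, h𝒮cov⟩ := hPk k (Nat.lt_succ_iff.mp (Finset.mem_range.mp hkmem))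
    set m := (P k).card with hm
    refine ⟨k, P k, hsub, ?_, ?_, 𝒮, h𝒮S, ?_, h𝒮cov⟩
    · -- size bound
      have hlogpos : 0 < Real.log (2 + (n : ℝ)) := by
        apply Real.log_pos
        have : (1 : ℝ) ≤ n := by exact_mod_cast hn1
        linarith
      have hJle : ((J : ℝ) + 1) ≤ 4 * Real.log (2 + (n : ℝ)) := by
        have hpow : (2 : ℝ) ^ (J + 1) ≤ 2 * n := by
          have h2 : 2 ^ J ≤ n := Nat.pow_log_le_self 2 hn1.ne'
          have : ((2 : ℕ) ^ J : ℝ) ≤ (n : ℝ) := by exact_mod_cast h2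
          rw [pow_succ]
          push_cast at this ⊢
          nlinarith
        have hlog1 : ((J : ℝ) + 1) * Real.log 2 ≤ Real.log (2 * n) := by
          have := Real.log_le_log (by positivity) hpow
          rw [Real.log_pow] at this
          push_cast at this
          linarith
        have hlog2 : Real.log (2 * (n : ℝ)) ≤ 2 * Real.log (2 + n) := by
          have h1 : (2 * (n : ℝ)) ≤ (2 + n) ^ 2 := by
            have : (1 : ℝ) ≤ n := by exact_mod_cast hn1
            nlinarith
          have h2 : Real.log (2 * (n : ℝ)) ≤ Real.log ((2 + n) ^ 2) := by
            apply Real.log_le_log (by positivity) h1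
          rwa [Real.log_pow] at h2
        have hl2 : (1 : ℝ) / 2 ≤ Real.log 2 := by
          have := Real.log_two_gt_d9
          linarith
        nlinarith [hlogpos]
      have hmn : (n : ℝ) ≤ ((J : ℝ) + 1) * m := by exact_mod_cast hksum
      have hm0 : (0 : ℝ) ≤ m := Nat.cast_nonneg _
      have key : (n : ℝ) ≤ 4 * Real.log (2 + n) * m := by nlinarith
      rw [show (1/4 : ℝ) * (Real.log (2 + (n : ℝ)))⁻¹ * (n : ℝ)
          = (n : ℝ) / (4 * Real.log (2 + (n : ℝ))) by field_simp]
      rw [div_le_iff₀ (by positivity)]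
      nlinarith
    · -- regularity
      intro T hT
      rw [hset (P k) T]
      have := hreg T hT
      have h2 : ((P k).filter (fun b => R b T)).card ≤ 2 * 2 ^ k := by
        rw [pow_succ] at this; omega
      calc (((P k).filter (fun b => R b T)).card : ℝ) ≤ ((2 * 2 ^ k : ℕ) : ℝ) := by
            exact_mod_cast h2
        _ = 2 * 2 ^ k := by push_cast; ring
    · -- slab count
      have : ((2 : ℝ) ^ k) * 𝒮.card ≤ m := by exact_mod_cast h𝒮c
      rw [le_div_iff₀ (by positivity)]
      nlinarith [this]
end

section
/- Let $T_1, T_2, T_3 \subset \mathbb{R}^{n+1}$ be slabs, where $T_i$ is the set of points whose (signed) distance to a hyperplane with unit normal $v_i$ is at most $\delta_i$, intersected with a ball of radius $\sqrt{R}$. If $|v_1 \wedge v_2 \wedge v_3| \geq \kappa > 0$, then $|T_1 \cap T_2 \cap T_3| \leq C_n \kappa^{-1} \delta_1 \delta_2 \delta_3 \, R^{(n-2)/2}$. -/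
open MeasureTheory

private lemma abs_coord_le_norm {ι : Type*} [Fintype ι] (w : EuclideanSpace ℝ ι) (j : ι) :
    |w j| ≤ ‖w‖ := by
  rw [EuclideanSpace.norm_eq]
  calc |w j| = Real.sqrt (‖w j‖ ^ 2) := by
        rw [Real.sqrt_sq (norm_nonneg _), Real.norm_eq_abs]
    _ ≤ Real.sqrt (∑ i, ‖w i‖ ^ 2) :=
        Real.sqrt_le_sqrt (Finset.single_le_sum (f := fun i => ‖w i‖ ^ 2)
          (fun i _ => sq_nonneg _) (Finset.mem_univ j))

private lemma linIndep_of_gram_det_ne_zero {E : Type*} [NormedAddCommGroup E]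
    [InnerProductSpace ℝ E] (v : Fin 3 → E)
    (h : (Matrix.of fun i j : Fin 3 => (inner ℝ (v i) (v j) : ℝ)).det ≠ 0) :
    LinearIndependent ℝ v := by
  set G : Matrix (Fin 3) (Fin 3) ℝ := Matrix.of fun i j : Fin 3 => (inner ℝ (v i) (v j) : ℝ)
  rw [Fintype.linearIndependent_iff]
  intro g hg i
  have hmul : G.mulVec g = 0 := by
    funext j
    have : (inner ℝ (v j) (∑ k, g k • v k) : ℝ) = 0 := by rw [hg]; simp
    simpa [G, Matrix.mulVec, dotProduct, inner_sum, real_inner_smul_right,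
      mul_comm] using this
  have hG : IsUnit G.det := isUnit_iff_ne_zero.mpr h
  have : G⁻¹.mulVec (G.mulVec g) = g := by
    rw [Matrix.mulVec_mulVec, Matrix.nonsing_inv_mul _ hG, Matrix.one_mulVec]
  rw [hmul] at this
  simp only [Matrix.mulVec_zero] at this
  exact congrFun this.symm i

/-- Three transverse slabs in `ℝ^{n+1}`: if the Gram determinant of the three
unit normals is at least `κ²` (i.e. `|v₁ ∧ v₂ ∧ v₃| ≥ κ`), then the
intersection of the three slabs of thicknesses `δᵢ`, intersected with a ball of
radius `√R`, has measure at most `C_n κ⁻¹ δ₁ δ₂ δ₃ R^{(n-2)/2}`. -/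
theorem transverse_slabs_intersection (n : ℕ) (hn : 2 ≤ n) :
    ∃ C : ℝ, 0 < C ∧
    ∀ (v : Fin 3 → EuclideanSpace ℝ (Fin (n + 1))) (δ c : Fin 3 → ℝ)
      (κ R : ℝ) (z : EuclideanSpace ℝ (Fin (n + 1))),
      (∀ i, ‖v i‖ = 1) → (∀ i, 0 < δ i) → 0 < κ → 1 ≤ R →
      κ ^ 2 ≤ (Matrix.of fun i j : Fin 3 => (inner ℝ (v i) (v j) : ℝ)).det →
      volume (⋂ i, ({x : EuclideanSpace ℝ (Fin (n + 1)) |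
          |(inner ℝ x (v i) : ℝ) - c i| ≤ δ i} ∩ Metric.ball z (Real.sqrt R)))
        ≤ ENNReal.ofReal (C * κ⁻¹ * δ 0 * δ 1 * δ 2 * R ^ (((n : ℝ) - 2) / 2)) := by
  refine ⟨2 ^ (n + 1), by positivity, ?_⟩
  intro v δ c κ R z hv hδ hκ hR hGram
  have hR0 : (0 : ℝ) ≤ R := by linarith
  have hGdet : (Matrix.of fun i j : Fin 3 => (inner ℝ (v i) (v j) : ℝ)).det ≠ 0 := by
    have : (0 : ℝ) < κ ^ 2 := by positivity
    exact ne_of_gt (lt_of_lt_of_le this hGram)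
  have hli : LinearIndependent ℝ v := linIndep_of_gram_det_ne_zero v hGdet
  haveI hwf : WellFoundedLT (Fin 3) := inferInstance
  -- Gram-Schmidt orthonormalization of v
  set g : Fin 3 → EuclideanSpace ℝ (Fin (n + 1)) := InnerProductSpace.gramSchmidtNormed ℝ v with hgdef
  have hg : Orthonormal ℝ g := InnerProductSpace.gramSchmidtNormed_orthonormal hli
  have hvmem : ∀ i, v i ∈ Submodule.span ℝ (Set.range g) := by
    intro i
    rw [hgdef, InnerProductSpace.span_gramSchmidtNormed_range, InnerProductSpace.span_gramSchmidt]
    exact Submodule.subset_span (Set.mem_range_self i)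
  -- extend to an orthonormal basis
  set s : Set (Fin (n + 1)) := {j | (j : ℕ) < 3} with hsdef
  set u : Fin (n + 1) → EuclideanSpace ℝ (Fin (n + 1)) := fun j => if h : (j : ℕ) < 3 then g ⟨j, h⟩ else 0 with hudef
  have hu : Orthonormal ℝ (s.restrict u) := by
    have heq : s.restrict u = g ∘ (fun j : s => (⟨(j : Fin (n + 1)), j.2⟩ : Fin 3)) := by
      funext j
      simp only [Set.restrict_apply, hudef, Function.comp_apply]
      exact dif_pos j.2
    rw [heq]
    exact hg.comp _ (fun j₁ j₂ h => Subtype.ext (Fin.ext (by simpa using congrArg Fin.val h)))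
  obtain ⟨b, hb⟩ := hu.exists_orthonormalBasis_extension_of_card_eq (by simp) 
  -- the index splitting
  have h3 : 3 + (n - 2) = n + 1 := by omega
  set e : Fin 3 ⊕ Fin (n - 2) ≃ Fin (n + 1) := finSumFinEquiv.trans (finCongr h3) with hedef
  have hval_inl : ∀ k : Fin 3, ((e (Sum.inl k)) : ℕ) = (k : ℕ) := by
    intro k; simp [hedef]
  have hval_inr : ∀ k : Fin (n - 2), ((e (Sum.inr k)) : ℕ) = 3 + (k : ℕ) := by
    intro k; simp [hedef]
  have hbJ : ∀ k : Fin 3, b (e (Sum.inl k)) = g k := by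
    intro k
    have h1 : e (Sum.inl k) ∈ s := by
      simp only [hsdef, Set.mem_setOf_eq, hval_inl k]; exact k.isLt
    rw [hb _ h1]
    simp only [hudef]
    rw [dif_pos (show ((e (Sum.inl k)) : ℕ) < 3 by rw [hval_inl k]; exact k.isLt)]
    exact congrArg g (Fin.ext (hval_inl k))
  -- tail coefficients vanish
  have htail : ∀ i (k : Fin (n - 2)), b.repr (v i) (e (Sum.inr k)) = 0 := by
    intro i k
    rw [b.repr_apply_apply]
    obtain ⟨a, ha⟩ := (Submodule.mem_span_range_iff_exists_fun ℝ).mp (hvmem i)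
    rw [← ha, inner_sum]
    refine Finset.sum_eq_zero fun k' _ => ?_
    rw [real_inner_smul_right, ← hbJ k']
    have hne : e (Sum.inr k) ≠ e (Sum.inl k') := by
      intro hcon
      exact (by simp : (Sum.inr k : Fin 3 ⊕ Fin (n - 2)) ≠ Sum.inl k') (e.injective hcon)
    rw [b.orthonormal.2 hne, mul_zero]
  -- sum splitting
  have hsplit : ∀ f : Fin (n + 1) → ℝ, ∑ j, f j =
      (∑ k : Fin 3, f (e (Sum.inl k))) + ∑ k : Fin (n - 2), f (e (Sum.inr k)) := by
    intro f
    rw [← e.sum_comp]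
    exact Fintype.sum_sum_type _
  -- the 3x3 matrix
  set M : Matrix (Fin 3) (Fin 3) ℝ :=
    Matrix.of fun i k : Fin 3 => b.repr (v i) (e (Sum.inl k)) with hMdef
  -- Parseval
  have hinner : ∀ (x : EuclideanSpace ℝ (Fin (n + 1))) i, (inner ℝ x (v i) : ℝ) =
      ∑ j : Fin (n + 1), (b.repr x j) * (b.repr (v i) j) := by
    intro x i
    rw [← b.repr.inner_map_map x (v i), PiLp.inner_apply]
    simp [mul_comm]
  have hGram_eq : ∀ i i' : Fin 3, (inner ℝ (v i) (v i') : ℝ) =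
      ∑ k : Fin 3, M i k * M i' k := by
    intro i i'
    rw [hinner (v i) i', hsplit]
    simp only [htail, mul_zero, Finset.sum_const_zero, add_zero]
    rfl
  have hMM : (Matrix.of fun i j : Fin 3 => (inner ℝ (v i) (v j) : ℝ)) = M * M.transpose := by
    ext i j
    rw [Matrix.mul_apply]
    simpa [Matrix.transpose_apply] using hGram_eq i j
  have hdet2 : κ ^ 2 ≤ M.det ^ 2 := by
    calc κ ^ 2 ≤ (Matrix.of fun i j : Fin 3 => (inner ℝ (v i) (v j) : ℝ)).det := hGram
      _ = M.det ^ 2 := by rw [hMM, Matrix.det_mul, Matrix.det_transpose]; ring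
  have habs : κ ≤ |M.det| := by nlinarith [abs_nonneg M.det, sq_abs M.det]
  have hMdet : M.det ≠ 0 := by
    intro h0; rw [h0] at habs; simp at habs; linarith
  -- the enclosing set
  set T : Set (EuclideanSpace ℝ (Fin (n + 1))) := (⋂ i, {x : EuclideanSpace ℝ (Fin (n + 1)) | |(inner ℝ x (v i) : ℝ) - c i| ≤ δ i}) ∩
    Metric.closedBall z (Real.sqrt R) with hTdef
  have hTm : MeasurableSet T := by
    refine MeasurableSet.inter (MeasurableSet.iInter fun i => ?_) measurableSet_closedBall
    have hcont : Continuous fun x : EuclideanSpace ℝ (Fin (n + 1)) => |(inner ℝ x (v i) : ℝ) - c i| :=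
      ((continuous_id.inner continuous_const).sub continuous_const).abs
    exact measurableSet_le hcont.measurable measurable_const
  have hST : (⋂ i, ({x : EuclideanSpace ℝ (Fin (n + 1)) | |(inner ℝ x (v i) : ℝ) - c i| ≤ δ i} ∩
      Metric.ball z (Real.sqrt R))) ⊆ T := by
    intro x hx
    simp only [Set.mem_iInter, Set.mem_inter_iff] at hx
    exact ⟨Set.mem_iInter.mpr fun i => (hx i).1,
      Metric.closedBall_subset_closedBall le_rfl (Metric.ball_subset_closedBall (hx 0).2)⟩
  -- the measure-preserving map
  set q : (Fin 3 → ℝ) × (Fin (n - 2) → ℝ) → EuclideanSpace ℝ (Fin (n + 1)) := fun p =>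
    (MeasurableEquiv.toLp 2 (Fin (n + 1) → ℝ))
      ((MeasurableEquiv.piCongrLeft (fun _ => ℝ) e)
        ((MeasurableEquiv.sumPiEquivProdPi (fun _ => ℝ)).symm p)) with hqdef
  set Φ : (Fin 3 → ℝ) × (Fin (n - 2) → ℝ) → EuclideanSpace ℝ (Fin (n + 1)) := fun p => b.repr.symm (q p) with hΦdef
  have hΦmp : MeasurePreserving Φ volume volume := by
    have h1 := volume_measurePreserving_sumPiEquivProdPi_symm
      (fun _ : Fin 3 ⊕ Fin (n - 2) => ℝ)
    have h2 := volume_measurePreserving_piCongrLeft (fun _ : Fin (n + 1) => ℝ) e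
    have h3' := (EuclideanSpace.volume_preserving_symm_measurableEquiv_toLp (Fin (n + 1))).symm
      (MeasurableEquiv.toLp 2 (Fin (n + 1) → ℝ)).symm
    have h4 := b.measurePreserving_repr_symm
    exact ((h4.comp h3').comp h2).comp h1
  have hq_inl : ∀ (a : Fin 3 → ℝ) (t : Fin (n - 2) → ℝ) (k : Fin 3),
      q (a, t) (e (Sum.inl k)) = a k := by
    intro a t k
    simp [hqdef, MeasurableEquiv.toLp_apply, MeasurableEquiv.coe_piCongrLeft,
      MeasurableEquiv.coe_sumPiEquivProdPi_symm, Equiv.piCongrLeft_apply_apply]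
  have hq_inr : ∀ (a : Fin 3 → ℝ) (t : Fin (n - 2) → ℝ) (k : Fin (n - 2)),
      q (a, t) (e (Sum.inr k)) = t k := by
    intro a t k
    simp [hqdef, MeasurableEquiv.toLp_apply, MeasurableEquiv.coe_piCongrLeft,
      MeasurableEquiv.coe_sumPiEquivProdPi_symm, Equiv.piCongrLeft_apply_apply]
  -- the product sets
  set A : Set (Fin 3 → ℝ) := (Matrix.toLin' M) ⁻¹'
    (Set.pi Set.univ fun i => Set.Icc (c i - δ i) (c i + δ i)) with hAdef
  set B : Set (Fin (n - 2) → ℝ) := Set.pi Set.univ fun k =>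
    Set.Icc (b.repr z (e (Sum.inr k)) - Real.sqrt R)
      (b.repr z (e (Sum.inr k)) + Real.sqrt R) with hBdef
  have hsub : Φ ⁻¹' T ⊆ A ×ˢ B := by
    rintro ⟨a, t⟩ hp
    obtain ⟨hp1, hp2⟩ := hp
    have hbx : b.repr (Φ (a, t)) = q (a, t) := by
      rw [hΦdef]; exact b.repr.apply_symm_apply _
    have hxv : ∀ i, (inner ℝ (Φ (a, t)) (v i) : ℝ) = ∑ k : Fin 3, M i k * a k := by
      intro i
      rw [hinner (Φ (a, t)) i, hsplit]
      simp only [htail, mul_zero, Finset.sum_const_zero, add_zero, hbx, hq_inl]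
      exact Finset.sum_congr rfl fun k _ => by rw [hMdef, Matrix.of_apply, mul_comm]
    constructor
    · -- A membership
      rw [hAdef, Set.mem_preimage, Set.mem_univ_pi]
      intro i
      have hsi := Set.mem_iInter.mp hp1 i
      rw [Set.mem_setOf_eq, hxv i] at hsi
      have habs' := abs_le.mp hsi
      have : Matrix.toLin' M a i = ∑ k : Fin 3, M i k * a k := by
        simp [Matrix.toLin'_apply, Matrix.mulVec, dotProduct]
      rw [this, Set.mem_Icc]
      constructor <;> linarith [habs'.1, habs'.2]
    · -- B membership
      rw [hBdef, Set.mem_univ_pi]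
      intro k
      have hdist : ‖Φ (a, t) - z‖ ≤ Real.sqrt R := by
        rw [← dist_eq_norm]; exact Metric.mem_closedBall.mp hp2
      have hco : |t k - b.repr z (e (Sum.inr k))| ≤ Real.sqrt R := by
        have h1 : |(b.repr (Φ (a, t) - z)) (e (Sum.inr k))| ≤ ‖b.repr (Φ (a, t) - z)‖ :=
          abs_coord_le_norm _ _
        rw [b.repr.norm_map] at h1
        have h2 : (b.repr (Φ (a, t) - z)) (e (Sum.inr k)) =
            t k - b.repr z (e (Sum.inr k)) := by
          rw [map_sub]
          simp [hbx, hq_inr]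
        rw [h2] at h1
        exact le_trans h1 hdist
      have := abs_le.mp hco
      rw [Set.mem_Icc]
      constructor <;> linarith [this.1, this.2]
  -- volume computations
  have hvolA : volume A = ENNReal.ofReal |M.det⁻¹| * ∏ i : Fin 3, ENNReal.ofReal (2 * δ i) := by
    rw [hAdef]
    rw [Measure.addHaar_preimage_linearMap volume
      (by rw [LinearMap.det_toLin']; exact hMdet)]
    rw [volume_pi_pi, LinearMap.det_toLin']
    congr 1
    refine Finset.prod_congr rfl fun i _ => ?_
    rw [Real.volume_Icc]
    congr 1
    ring
  have hvolB : volume B = ENNReal.ofReal (2 * Real.sqrt R) ^ (n - 2) := by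
    rw [hBdef, volume_pi_pi]
    have : ∀ k : Fin (n - 2), volume (Set.Icc (b.repr z (e (Sum.inr k)) - Real.sqrt R)
        (b.repr z (e (Sum.inr k)) + Real.sqrt R)) = ENNReal.ofReal (2 * Real.sqrt R) := by
      intro k; rw [Real.volume_Icc]; congr 1; ring
    simp [this]
  have hmain : volume T ≤ ENNReal.ofReal |M.det⁻¹| * (∏ i : Fin 3, ENNReal.ofReal (2 * δ i)) *
      ENNReal.ofReal (2 * Real.sqrt R) ^ (n - 2) := by
    rw [← hΦmp.measure_preimage hTm.nullMeasurableSet]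
    calc volume (Φ ⁻¹' T) ≤ volume (A ×ˢ B) := measure_mono hsub
      _ = volume A * volume B := by rw [Measure.volume_eq_prod, Measure.prod_prod]
      _ = _ := by rw [hvolA, hvolB, mul_assoc]
  refine le_trans (measure_mono hST) (le_trans hmain ?_)
  -- final arithmetic
  have hδ0 := (hδ 0).le
  have hδ1 := (hδ 1).le
  have hδ2 := (hδ 2).le
  have hsR : (0 : ℝ) ≤ Real.sqrt R := Real.sqrt_nonneg R
  rw [Fin.prod_univ_three]
  rw [← ENNReal.ofReal_pow (by positivity)]
  rw [← ENNReal.ofReal_mul (by positivity), ← ENNReal.ofReal_mul (by positivity),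
    ← ENNReal.ofReal_mul (abs_nonneg _), ← ENNReal.ofReal_mul (by positivity)]
  refine ENNReal.ofReal_le_ofReal ?_
  have hRs : (Real.sqrt R) ^ (n - 2) = R ^ (((n : ℝ) - 2) / 2) := by
    rw [Real.sqrt_eq_rpow, ← Real.rpow_natCast (R ^ (1 / 2 : ℝ)) (n - 2),
      ← Real.rpow_mul hR0]
    congr 1
    rw [Nat.cast_sub hn]
    push_cast
    ring
  have h8 : (2 : ℝ) ^ (n + 1) = 8 * 2 ^ (n - 2) := by
    rw [show n + 1 = 3 + (n - 2) from by omega, pow_add]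
    norm_num
  have hinv : |M.det|⁻¹ ≤ κ⁻¹ := by
    exact inv_anti₀ hκ habs
  have hRp : (0 : ℝ) ≤ R ^ (((n : ℝ) - 2) / 2) := Real.rpow_nonneg hR0 _
  calc |M.det⁻¹| * (2 * δ 0 * (2 * δ 1) * (2 * δ 2)) * (2 * Real.sqrt R) ^ (n - 2)
      = (8 * 2 ^ (n - 2)) * |M.det|⁻¹ * δ 0 * δ 1 * δ 2 * ((Real.sqrt R) ^ (n - 2)) := by
        rw [abs_inv, mul_pow]; ring
    _ = 2 ^ (n + 1) * |M.det|⁻¹ * δ 0 * δ 1 * δ 2 * R ^ (((n : ℝ) - 2) / 2) := by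
        rw [h8, hRs]
    _ ≤ 2 ^ (n + 1) * κ⁻¹ * δ 0 * δ 1 * δ 2 * R ^ (((n : ℝ) - 2) / 2) := by
        gcongr
end
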